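/- Let d ≥ 1 and let (τ, v, η, ζ) : ℝ² → ℝ × ℝ × ℝ^d × ℝ^d be a C¹ solution of the augmented system ∂ₜτ + v∂ₛτ = τ∂ₛv, ∂ₜv + v∂ₛv = τ∂ₛτ, ∂ₜη + v∂ₛη = −τ∂ₛζ, ∂ₜζ + v∂ₛζ = −τ∂ₛη, and fix ε ∈ {−1, +1}. Assume the characteristic speed (t,s) ↦ v(t,s) + ετ(t,s) is bounded on ℝ² and Lipschitz in s uniformly for t in compact sets. Then for every continuous function f : ℝ × ℝ^d → ℝ and every r ∈ ℝ: if f(v(0,s) − ετ(0,s), η(0,s) + εζ(0,s)) = r for all s ∈ ℝ, then f(v(t,s) − ετ(t,s), η(t,s) + εζ(t,s)) = r for all (t,s) ∈ ℝ². In particular the sets {(τ,v,η,ζ) : (v − ετ)² + |η + εζ|² = 1} are invariant under the flow of the augmented system. -/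

import Mathlib

open scoped RealInnerProductSpace

/-- Partial derivative in the first variable `t` of a map on `ℝ × ℝ`. -/
noncomputable def pt {F : Type*} [NormedAddCommGroup F] [NormedSpace ℝ F]
    (X : ℝ × ℝ → F) (p : ℝ × ℝ) : F := deriv (fun t => X (t, p.2)) p.1

/-- Partial derivative in the second variable `s` of a map on `ℝ × ℝ`. -/
noncomputable def ps {F : Type*} [NormedAddCommGroup F] [NormedSpace ℝ F]
    (X : ℝ × ℝ → F) (p : ℝ × ℝ) : F := deriv (fun s => X (p.1, s)) p.2

lemma pt_eq_fderiv {F : Type*} [NormedAddCommGroup F] [NormedSpace ℝ F]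
    (X : ℝ × ℝ → F) (hX : Differentiable ℝ X) (p : ℝ × ℝ) :
    pt X p = fderiv ℝ X p ((1 : ℝ), (0 : ℝ)) := by
  unfold pt
  have hc : HasDerivAt (fun t : ℝ => (t, p.2)) ((1 : ℝ), (0 : ℝ)) p.1 :=
    (hasDerivAt_id p.1).prodMk (hasDerivAt_const _ _)
  have h := (hX p).hasFDerivAt.comp_hasDerivAt p.1 hc
  simp only [Function.comp_def] at h
  exact h.deriv

lemma ps_eq_fderiv {F : Type*} [NormedAddCommGroup F] [NormedSpace ℝ F]
    (X : ℝ × ℝ → F) (hX : Differentiable ℝ X) (p : ℝ × ℝ) :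
    ps X p = fderiv ℝ X p ((0 : ℝ), (1 : ℝ)) := by
  unfold ps
  have hc : HasDerivAt (fun s : ℝ => (p.1, s)) ((0 : ℝ), (1 : ℝ)) p.2 :=
    (hasDerivAt_const _ _).prodMk (hasDerivAt_id p.2)
  have h := (hX p).hasFDerivAt.comp_hasDerivAt p.2 hc
  simp only [Function.comp_def] at h
  exact h.deriv

lemma chainW {F : Type*} [NormedAddCommGroup F] [NormedSpace ℝ F]
    (X : ℝ × ℝ → F) (hX : Differentiable ℝ X) {f : ℝ → ℝ} {t c : ℝ} {s : Set ℝ}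
    (hf : HasDerivWithinAt f c s t) :
    HasDerivWithinAt (fun u => X (u, f u)) (pt X (t, f t) + c • ps X (t, f t)) s t := by
  have hcurve : HasDerivWithinAt (fun u : ℝ => (u, f u)) ((1 : ℝ), c) s t :=
    (hasDerivWithinAt_id t s).prodMk hf
  have h := (hX (t, f t)).hasFDerivAt.comp_hasDerivWithinAt t hcurve
  simp only [Function.comp_def] at h
  convert h using 1
  rw [pt_eq_fderiv X hX, ps_eq_fderiv X hX, ← ContinuousLinearMap.map_smul,
    ← ContinuousLinearMap.map_add]
  congr 1
  simp [Prod.ext_iff]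


/-- Invariance of the level sets `f(v - ετ, η + εζ) = r` under the flow of the
augmented system: if the characteristic speed `v + ετ` is bounded and Lipschitz in
`s` uniformly for `t` in compact sets, then any relation
`f(v - ετ, η + εζ) = r` holding at `t = 0` holds for all time. In particular the
sets `{(v - ετ)² + |η + εζ|² = 1}` are invariant. -/
theorem statement13 (d : ℕ) (hd : 1 ≤ d)
    (τ v : ℝ × ℝ → ℝ) (η ζ : ℝ × ℝ → EuclideanSpace ℝ (Fin d))
    (hτ : ContDiff ℝ 1 τ) (hv : ContDiff ℝ 1 v)
    (hη : ContDiff ℝ 1 η) (hζ : ContDiff ℝ 1 ζ)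
    (h1 : ∀ p : ℝ × ℝ, pt τ p + v p * ps τ p = τ p * ps v p)
    (h2 : ∀ p : ℝ × ℝ, pt v p + v p * ps v p = τ p * ps τ p)
    (h3 : ∀ p : ℝ × ℝ, pt η p + v p • ps η p = -(τ p) • ps ζ p)
    (h4 : ∀ p : ℝ × ℝ, pt ζ p + v p • ps ζ p = -(τ p) • ps η p)
    (ε : ℝ) (hε : ε ∈ ({-1, 1} : Set ℝ))
    (hbdd : ∃ C : ℝ, ∀ p : ℝ × ℝ, |v p + ε * τ p| ≤ C)
    (hlip : ∀ K : Set ℝ, IsCompact K → ∃ L : NNReal, ∀ t ∈ K,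
      LipschitzWith L (fun s => v (t, s) + ε * τ (t, s))) :
    (∀ (f : ℝ × EuclideanSpace ℝ (Fin d) → ℝ), Continuous f → ∀ r : ℝ,
      (∀ s : ℝ, f (v (0, s) - ε * τ (0, s), η (0, s) + ε • ζ (0, s)) = r) →
      ∀ p : ℝ × ℝ, f (v p - ε * τ p, η p + ε • ζ p) = r) ∧
    ((∀ s : ℝ, (v (0, s) - ε * τ (0, s)) ^ 2 + ‖η (0, s) + ε • ζ (0, s)‖ ^ 2 = 1) →
      ∀ p : ℝ × ℝ, (v p - ε * τ p) ^ 2 + ‖η p + ε • ζ p‖ ^ 2 = 1) := by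
  have hε2 : ε * ε = 1 := by
    rcases hε with h | h <;> simp_all
  have hdv := hv.differentiable one_ne_zero
  have hdτ := hτ.differentiable one_ne_zero
  have hdη := hη.differentiable one_ne_zero
  have hdζ := hζ.differentiable one_ne_zero
  have hcv : Continuous v := hv.continuous
  have hcτ : Continuous τ := hτ.continuous
  have hcη : Continuous η := hη.continuous
  have hcζ : Continuous ζ := hζ.continuous
  obtain ⟨C, hC⟩ := hbdd
  have hC0 : 0 ≤ C := (abs_nonneg _).trans (hC (0, 0))
  have key : ∀ (f : ℝ × EuclideanSpace ℝ (Fin d) → ℝ), ∀ r : ℝ,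
      (∀ s : ℝ, f (v (0, s) - ε * τ (0, s), η (0, s) + ε • ζ (0, s)) = r) →
      ∀ p : ℝ × ℝ, f (v p - ε * τ p, η p + ε • ζ p) = r := by
    rintro f r h0 ⟨t₀, s₀⟩
    set a : ℝ := |t₀| + 1 with ha_def
    have habs : 0 ≤ |t₀| := abs_nonneg t₀
    have hta : t₀ ∈ Set.Icc (-a) a :=
      ⟨by linarith [neg_abs_le t₀], by linarith [le_abs_self t₀]⟩
    have h0a : (0 : ℝ) ∈ Set.Icc (-a) a := ⟨by linarith, by linarith⟩
    obtain ⟨L, hL⟩ := hlip (Set.Icc (-a) a) isCompact_Icc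
    have hpl : IsPicardLindelof (fun t s => v (t, s) + ε * τ (t, s)) (tmin := -a) (tmax := a)
        ⟨t₀, hta⟩ s₀ ⟨2 * C * a, mul_nonneg (mul_nonneg zero_le_two hC0) (by positivity)⟩ 0
        ⟨C, hC0⟩ L :=
      { lipschitzOnWith := fun t ht => (hL t ht).lipschitzOnWith
        continuousOn := fun x _ =>
          ((hcv.comp (continuous_id.prodMk continuous_const)).add
            (continuous_const.mul (hcτ.comp (continuous_id.prodMk continuous_const)))).continuousOn
        norm_le := fun t _ x _ => (Real.norm_eq_abs _).le.trans (hC (t, x))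
        mul_max_le := by
          have hmax : max (a - t₀) (t₀ - -a) ≤ 2 * a := by
            rw [max_le_iff]
            exact ⟨by linarith [hta.1], by linarith [hta.2]⟩
          have : C * max (a - t₀) (t₀ - -a) ≤ 2 * C * a :=
            calc C * max (a - t₀) (t₀ - -a) ≤ C * (2 * a) :=
                  mul_le_mul_of_nonneg_left hmax hC0
              _ = 2 * C * a := by ring
          simp only [tsub_zero, NNReal.coe_zero, sub_zero]
          exact this }
    obtain ⟨γ, hγ0, hγ'⟩ := hpl.exists_eq_forall_mem_Icc_hasDerivWithinAt₀
    set I := Set.Icc (-a) a with hI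
    have hγcont : ContinuousOn γ I := fun t ht => (hγ' t ht).continuousWithinAt
    have hcurve : ContinuousOn (fun u => (u, γ u)) I := continuousOn_id.prodMk hγcont
    -- the transported quantities are constant along the characteristic
    have hg1 : ∀ t ∈ I, HasDerivWithinAt (fun u => v (u, γ u) - ε * τ (u, γ u)) 0 I t := by
      intro t ht
      have hfd := hγ' t ht
      have Hv := chainW v hdv hfd
      have Hτ := chainW τ hdτ hfd
      have H : HasDerivWithinAt (fun u => v (u, γ u) - ε * τ (u, γ u)) _ I t :=
        Hv.sub (Hτ.const_mul ε)
      convert H using 1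
      set q : ℝ × ℝ := (t, γ t) with hq
      have e1 := h1 q
      have e2 := h2 q
      simp only [smul_eq_mul]
      linear_combination (-1 : ℝ) * e2 + ε * e1 + (τ q * ps τ q) * hε2
    have hg2 : ∀ t ∈ I, HasDerivWithinAt (fun u => η (u, γ u) + ε • ζ (u, γ u)) 0 I t := by
      intro t ht
      have hfd := hγ' t ht
      have Hη := chainW η hdη hfd
      have Hζ := chainW ζ hdζ hfd
      have H : HasDerivWithinAt (fun u => η (u, γ u) + ε • ζ (u, γ u)) _ I t :=
        Hη.add (Hζ.const_smul ε)
      convert H using 1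
      set q : ℝ × ℝ := (t, γ t) with hq
      have e3' : pt η q = -(τ q) • ps ζ q - v q • ps η q := eq_sub_of_add_eq (h3 q)
      have e4' : pt ζ q = -(τ q) • ps η q - v q • ps ζ q := eq_sub_of_add_eq (h4 q)
      rw [e3', e4']
      match_scalars
      · linear_combination (-τ q) * hε2
      · ring
    have hcont1 : ContinuousOn (fun u => v (u, γ u) - ε * τ (u, γ u)) I :=
      (hcv.comp_continuousOn hcurve).sub (continuousOn_const.mul (hcτ.comp_continuousOn hcurve))
    have hcont2 : ContinuousOn (fun u => η (u, γ u) + ε • ζ (u, γ u)) I :=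
      (hcη.comp_continuousOn hcurve).add ((hcζ.comp_continuousOn hcurve).const_smul ε)
    have hconst1 := constant_of_has_deriv_right_zero hcont1 (fun x hx =>
      (hg1 x (Set.Ico_subset_Icc_self hx)).mono_of_mem_nhdsWithin (Icc_mem_nhdsGE_of_mem hx))
    have hconst2 := constant_of_has_deriv_right_zero hcont2 (fun x hx =>
      (hg2 x (Set.Ico_subset_Icc_self hx)).mono_of_mem_nhdsWithin (Icc_mem_nhdsGE_of_mem hx))
    have A1 : v (t₀, γ t₀) - ε * τ (t₀, γ t₀) = v (0, γ 0) - ε * τ (0, γ 0) := by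
      simpa using (hconst1 t₀ hta).trans (hconst1 0 h0a).symm
    have A2 : η (t₀, γ t₀) + ε • ζ (t₀, γ t₀) = η (0, γ 0) + ε • ζ (0, γ 0) := by
      simpa using (hconst2 t₀ hta).trans (hconst2 0 h0a).symm
    rw [show ((t₀, s₀) : ℝ × ℝ) = (t₀, γ t₀) from by rw [hγ0], A1, A2]
    exact h0 (γ 0)
  exact ⟨fun f _ r h0 p => key f r h0 p,
    fun h0 p => key (fun q => q.1 ^ 2 + ‖q.2‖ ^ 2) 1 h0 p⟩
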